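/- Let n ≥ 1 and let A, B ⊆ ℝ^n be closed subsets. Assume that the restriction s|_{A×B} : A × B → ℝ^n of the addition map is proper, and that for every x ∈ A + B the fiber {(a,b) ∈ A × B : a + b = x} is contractible. Then A + B is closed in ℝ^n, and the pushforward along s|_{A×B} of the constant sheaf k_{A×B} is isomorphic, as a sheaf of k-vector spaces on ℝ^n, to the pushforward along the inclusion A + B ↪ ℝ^n of the constant sheaf k_{A+B}. -/

import Mathlib

open CategoryTheory TopologicalSpace Set Topology

noncomputable section

variable (k : Type) [Field k]

/-- The support of the function `s : V ∩ I → k` is closed in `V`. -/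
def SuppClosedIn (I V : Set ℝ) (s : ↥(V ∩ I) → k) : Prop :=
  ∀ x ∈ V, x ∈ closure {y : ℝ | ∃ h : y ∈ V ∩ I, s ⟨y, h⟩ ≠ 0} →
    ∃ h : x ∈ V ∩ I, s ⟨x, h⟩ ≠ 0

lemma zero_locConst (I V : Set ℝ) :
    IsLocallyConstant (0 : ↥(V ∩ I) → k) ∧ SuppClosedIn k I V 0 := by
  constructor
  · exact IsLocallyConstant.const 0
  · intro x _ hx
    exfalso
    have h0 : {y : ℝ | ∃ h : y ∈ V ∩ I, (0 : ↥(V ∩ I) → k) ⟨y, h⟩ ≠ 0} = ∅ := by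
      ext y; simp
    rw [h0, closure_empty] at hx
    exact hx

/-- The sections over `V` of the sheaf `k_I`: locally constant functions on `V ∩ I`
whose support is closed in `V`. -/
def secSub (I V : Set ℝ) : Submodule k (↥(V ∩ I) → k) where
  carrier := {s | IsLocallyConstant s ∧ SuppClosedIn k I V s}
  zero_mem' := zero_locConst k I V
  add_mem' := by
    rintro s t ⟨hslc, hscl⟩ ⟨htlc, htcl⟩
    have hlc : IsLocallyConstant (s + t) := hslc.comp₂ htlc (· + ·)
    refine ⟨hlc, ?_⟩
    intro x hxV hxcl
    have hsub : {y : ℝ | ∃ h : y ∈ V ∩ I, (s + t) ⟨y, h⟩ ≠ 0}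
        ⊆ {y : ℝ | ∃ h : y ∈ V ∩ I, s ⟨y, h⟩ ≠ 0}
          ∪ {y : ℝ | ∃ h : y ∈ V ∩ I, t ⟨y, h⟩ ≠ 0} := by
      rintro y ⟨h, hy⟩
      by_cases hsy : s ⟨y, h⟩ = 0
      · refine Or.inr ⟨h, fun h0 => hy ?_⟩
        show s ⟨y, h⟩ + t ⟨y, h⟩ = 0
        rw [hsy, h0, add_zero]
      · exact Or.inl ⟨h, hsy⟩
    have hxVI : x ∈ V ∩ I := by
      have hcl2 := closure_mono hsub hxcl
      rw [closure_union] at hcl2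
      rcases hcl2 with h | h
      · exact (hscl x hxV h).choose
      · exact (htcl x hxV h).choose
    refine ⟨hxVI, ?_⟩
    have hA : IsClosed {y : ↥(V ∩ I) | (s + t) y ≠ 0} := by
      have h1 : IsOpen ((s + t) ⁻¹' {0}) := hlc {0}
      have h2 := h1.isClosed_compl
      have h3 : ((s + t) ⁻¹' {0})ᶜ = {y : ↥(V ∩ I) | (s + t) y ≠ 0} := by
        ext y; simp
      exact h3 ▸ h2
    have hmem : (⟨x, hxVI⟩ : ↥(V ∩ I)) ∈ closure {y : ↥(V ∩ I) | (s + t) y ≠ 0} := by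
      rw [closure_subtype]
      have himg : Subtype.val '' {y : ↥(V ∩ I) | (s + t) y ≠ 0}
          = {y : ℝ | ∃ h : y ∈ V ∩ I, (s + t) ⟨y, h⟩ ≠ 0} := by
        ext y
        constructor
        · rintro ⟨z, hz, rfl⟩; exact ⟨z.2, hz⟩
        · rintro ⟨h, hy⟩; exact ⟨⟨y, h⟩, hy, rfl⟩
      rw [himg]
      exact hxcl
    have := hA.closure_eq ▸ hmem
    exact this
  smul_mem' := by
    intro c s hs
    rcases hs with ⟨hlc, hcl⟩
    by_cases hc : c = 0
    · subst hc
      rw [zero_smul]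
      exact zero_locConst k I V
    · constructor
      · exact hlc.comp (fun a => c • a)
      · intro x hxV hxcl
        have hset : {y : ℝ | ∃ h : y ∈ V ∩ I, (c • s) ⟨y, h⟩ ≠ 0}
            = {y : ℝ | ∃ h : y ∈ V ∩ I, s ⟨y, h⟩ ≠ 0} := by
          ext y
          constructor
          · rintro ⟨h, hy⟩
            refine ⟨h, fun h0 => hy ?_⟩
            show c • s ⟨y, h⟩ = 0
            rw [h0, smul_zero]
          · rintro ⟨h, hy⟩
            exact ⟨h, by simpa [smul_eq_zero, hc] using hy⟩
        rw [hset] at hxcl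
        obtain ⟨h, hy⟩ := hcl x hxV hxcl
        exact ⟨h, by simpa [smul_eq_zero, hc] using hy⟩
/-- Restriction of sections. -/
def resFun (I : Set ℝ) {V W : Set ℝ} (h : W ⊆ V) (s : ↥(V ∩ I) → k) : ↥(W ∩ I) → k :=
  fun y => s ⟨y.1, ⟨h y.2.1, y.2.2⟩⟩

lemma resFun_mem (I : Set ℝ) {V W : Set ℝ} (h : W ⊆ V) (s : ↥(V ∩ I) → k)
    (hs : s ∈ secSub k I V) : resFun k I h s ∈ secSub k I W := by
  obtain ⟨hlc, hcl⟩ := hs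
  constructor
  · exact hlc.comp_continuous (Continuous.subtype_mk continuous_subtype_val _)
  · intro x hxW hxcl
    have hsub : {y : ℝ | ∃ h' : y ∈ W ∩ I, resFun k I h s ⟨y, h'⟩ ≠ 0}
        ⊆ {y : ℝ | ∃ h' : y ∈ V ∩ I, s ⟨y, h'⟩ ≠ 0} := by
      rintro y ⟨h', hy⟩
      exact ⟨⟨h h'.1, h'.2⟩, hy⟩
    obtain ⟨hxVI, hne⟩ := hcl x (h hxW) (closure_mono hsub hxcl)
    exact ⟨⟨hxW, hxVI.2⟩, hne⟩

/-- Restriction as a linear map. -/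
def resLM (I : Set ℝ) {V W : Set ℝ} (h : W ⊆ V) : secSub k I V →ₗ[k] secSub k I W where
  toFun s := ⟨resFun k I h s.1, resFun_mem k I h s.1 s.2⟩
  map_add' s t := rfl
  map_smul' c s := rfl

/-- The presheaf `k_I` on `ℝ`. -/
def intervalPresheaf (I : Set ℝ) : TopCat.Presheaf (ModuleCat.{0} k) (TopCat.of ℝ) where
  obj V := ModuleCat.of k (secSub k I V.unop.1)
  map {V W} f := ModuleCat.ofHom (resLM k I (leOfHom f.unop))
  map_id V := rfl
  map_comp f g := rfl
theorem intervalPresheaf_isSheaf (I : Set ℝ) : (intervalPresheaf k I).IsSheaf := by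
  classical
  rw [TopCat.Presheaf.isSheaf_iff_isSheafUniqueGluing]
  intro ι U sf hcomp
  change (i : ι) → secSub k I (U i).1 at sf
  -- pointwise compatibility
  have key : ∀ (i j : ι) (x : ℝ) (hxi : x ∈ (U i).1 ∩ I) (hxj : x ∈ (U j).1 ∩ I),
      (sf i).1 ⟨x, hxi⟩ = (sf j).1 ⟨x, hxj⟩ := by
    intro i j x hxi hxj
    have h := hcomp i j
    have hmem : x ∈ (U i ⊓ U j).1 ∩ I := ⟨⟨hxi.1, hxj.1⟩, hxi.2⟩
    have h2 := congrFun (congrArg Subtype.val h) ⟨x, hmem⟩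
    exact h2
  have hmemS : ∀ x : ↥((iSup U : Opens (TopCat.of ℝ)).1 ∩ I), ∃ i, x.1 ∈ U i := by
    intro x
    exact Opens.mem_iSup.mp x.2.1
  set idx : ↥((iSup U : Opens (TopCat.of ℝ)).1 ∩ I) → ι := fun x => (hmemS x).choose with hidxdef
  have hidx : ∀ x, x.1 ∈ U (idx x) := fun x => (hmemS x).choose_spec
  set s₀ : ↥((iSup U : Opens (TopCat.of ℝ)).1 ∩ I) → k :=
    fun x => (sf (idx x)).1 ⟨x.1, ⟨hidx x, x.2.2⟩⟩ with hs₀def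
  have hs₀ : ∀ (x : ↥((iSup U : Opens (TopCat.of ℝ)).1 ∩ I)) (i : ι) (hx : x.1 ∈ U i),
      s₀ x = (sf i).1 ⟨x.1, ⟨hx, x.2.2⟩⟩ :=
    fun x i hx => key (idx x) i x.1 ⟨hidx x, x.2.2⟩ ⟨hx, x.2.2⟩
  have hlc : IsLocallyConstant s₀ := by
    rw [IsLocallyConstant.iff_exists_open]
    intro x
    obtain ⟨i, hi⟩ := hmemS x
    have hlci : IsLocallyConstant ((sf i).1 : ↥((U i).1 ∩ I) → k) := (sf i).2.1
    obtain ⟨W, hWopen, hpW, hWconst⟩ := hlci.exists_open (⟨x.1, ⟨hi, x.2.2⟩⟩ : ↥((U i).1 ∩ I))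
    obtain ⟨O, hOopen, hWO⟩ := isOpen_induced_iff.mp hWopen
    subst hWO
    refine ⟨Subtype.val ⁻¹' (O ∩ (U i).1), (hOopen.inter (U i).2).preimage continuous_subtype_val,
      ⟨hpW, hi⟩, ?_⟩
    intro y hy
    have hyi : y.1 ∈ U i := hy.2
    rw [hs₀ y i hyi, hs₀ x i hi]
    exact hWconst ⟨y.1, ⟨hyi, y.2.2⟩⟩ hy.1
  have hscl : SuppClosedIn k I (iSup U : Opens (TopCat.of ℝ)).1 s₀ := by
    intro x hxS hxcl
    obtain ⟨i, hi⟩ := Opens.mem_iSup.mp hxS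
    have h1 : x ∈ closure ({y : ℝ | ∃ h : y ∈ (iSup U : Opens (TopCat.of ℝ)).1 ∩ I, s₀ ⟨y, h⟩ ≠ 0}
        ∩ (U i).1) := by
      rw [mem_closure_iff] at hxcl ⊢
      intro O hO hxO
      obtain ⟨z, hz⟩ := hxcl (O ∩ (U i).1) (hO.inter (U i).2) ⟨hxO, hi⟩
      exact ⟨z, hz.1.1, hz.2, hz.1.2⟩
    have hsub : {y : ℝ | ∃ h : y ∈ (iSup U : Opens (TopCat.of ℝ)).1 ∩ I, s₀ ⟨y, h⟩ ≠ 0}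
        ∩ (U i).1 ⊆ {y : ℝ | ∃ h : y ∈ (U i).1 ∩ I, (sf i).1 ⟨y, h⟩ ≠ 0} := by
      rintro y ⟨⟨hy, hne⟩, hyi⟩
      refine ⟨⟨hyi, hy.2⟩, ?_⟩
      rw [← hs₀ ⟨y, hy⟩ i hyi]
      exact hne
    obtain ⟨hyUI, hne⟩ := (sf i).2.2 x hi (closure_mono hsub h1)
    refine ⟨⟨hxS, hyUI.2⟩, ?_⟩
    rw [hs₀ ⟨x, ⟨hxS, hyUI.2⟩⟩ i hyUI.1]
    exact hne
  refine ⟨⟨s₀, hlc, hscl⟩, ?_, ?_⟩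
  · intro i
    apply Subtype.ext
    funext y
    exact hs₀ ⟨y.1, ⟨leOfHom (Opens.leSupr U i) y.2.1, y.2.2⟩⟩ i y.2.1
  · intro t ht
    apply Subtype.ext
    funext x
    have h := ht (idx x)
    have h2 := congrFun (congrArg Subtype.val h) ⟨x.1, ⟨hidx x, x.2.2⟩⟩
    exact h2

/-- The sheaf `k_I` on `ℝ` for an interval `I`: locally constant functions on `V ∩ I`
whose support is closed in `V`. -/
def intervalSheaf (I : Set ℝ) :
    Sheaf (Opens.grothendieckTopology (TopCat.of ℝ)) (ModuleCat.{0} k) :=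
  ⟨intervalPresheaf k I, intervalPresheaf_isSheaf k I⟩
/-- The category of sheaves of `k`-vector spaces on `ℝ`. -/
abbrev RealSheafCat := Sheaf (Opens.grothendieckTopology (TopCat.of ℝ)) (ModuleCat.{0} k)

instance sheafHomSMul (F G : RealSheafCat k) : SMul k (F ⟶ G) :=
  ⟨fun c f => ⟨c • f.hom⟩⟩

instance sheafHomModule (F G : RealSheafCat k) : Module k (F ⟶ G) :=
  Function.Injective.module k
    { toFun := fun f : F ⟶ G => f.hom
      map_zero' := rfl
      map_add' := fun _ _ => rfl }
    (fun _ _ h => Sheaf.hom_ext h) (fun _ _ => rfl)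

instance : HasExt.{1} (RealSheafCat k) := by
  letI := HasDerivedCategory.standard (RealSheafCat k)
  exact hasExt_of_hasDerivedCategory _

/-- The interval `(a, b)` with possibly infinite endpoints. -/
def Ioo' (a b : EReal) : Set ℝ := {x : ℝ | a < (x : EReal) ∧ (x : EReal) < b}

/-- The interval `[a, b)` with a possibly infinite right endpoint. -/
def Ico' (a : ℝ) (b : EReal) : Set ℝ := {x : ℝ | a ≤ x ∧ (x : EReal) < b}

/-- The interval `(a, b]` with a possibly infinite left endpoint. -/
def Ioc' (a : EReal) (b : ℝ) : Set ℝ := {x : ℝ | a < (x : EReal) ∧ x ≤ b}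

/-- Identification of sheaves on the topological space `ℝ` with objects of `RealSheafCat`. -/
def toRS (F : TopCat.Sheaf (ModuleCat.{0} k) (TopCat.of ℝ)) : RealSheafCat k := F


/-- The presheaf of locally constant `k`-valued functions on a space. -/
def lcPresheaf (X : TopCat.{0}) : TopCat.Presheaf (ModuleCat.{0} k) X where
  obj U := ModuleCat.of k (LocallyConstant ↥(Opposite.unop U) k)
  map {U V} g := ModuleCat.ofHom (LocallyConstant.comapₗ k
    ⟨Set.inclusion (leOfHom g.unop), continuous_inclusion (leOfHom g.unop)⟩)
  map_id U := by ext f; rfl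
  map_comp f g := by ext h; rfl

/-- The morphism from the constant presheaf to `lcPresheaf`. -/
def constToLc (X : TopCat.{0}) :
    (Functor.const (Opens ↥X)ᵒᵖ).obj (ModuleCat.of k k) ⟶ lcPresheaf k X where
  app U := ModuleCat.ofHom (LocallyConstant.constₗ k)
  naturality U V g := by ext c; rfl

/-- Reinterpret a section of `lcPresheaf` as a locally constant function. -/
def asLC {X : TopCat.{0}} {U : Opens ↥X}
    (x : (forget (ModuleCat.{0} k)).obj ((lcPresheaf k X).obj (Opposite.op U))) :
    LocallyConstant ↥U k := x

theorem lcPresheaf_isSheaf (X : TopCat.{0}) : (lcPresheaf k X).IsSheaf := by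
  classical
  rw [TopCat.Presheaf.isSheaf_iff_isSheafUniqueGluing]
  intro ι U sf hcomp
  have key : ∀ (i j : ι) (x : ↥X) (hxi : x ∈ U i) (hxj : x ∈ U j),
      asLC k (sf i) ⟨x, hxi⟩
        = asLC k (sf j) ⟨x, hxj⟩ := by
    intro i j x hxi hxj
    have h : asLC k ((lcPresheaf k X).map (homOfLE (inf_le_left (b := U j))).op (sf i))
        = asLC k ((lcPresheaf k X).map (homOfLE inf_le_right).op (sf j)) := hcomp i j
    exact DFunLike.congr_fun h (⟨x, ⟨hxi, hxj⟩⟩ : ↥(U i ⊓ U j))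
  have hmemS : ∀ x : ↥(iSup U : Opens ↥X), ∃ i, x.1 ∈ U i := fun x => Opens.mem_iSup.mp x.2
  set idx : ↥(iSup U : Opens ↥X) → ι := fun x => (hmemS x).choose with hidxdef
  have hidx : ∀ x, x.1 ∈ U (idx x) := fun x => (hmemS x).choose_spec
  set s₀ : ↥(iSup U : Opens ↥X) → k := fun x => asLC k (sf (idx x)) ⟨x.1, hidx x⟩ with hs₀def
  have hs₀ : ∀ (x : ↥(iSup U : Opens ↥X)) (i : ι) (hx : x.1 ∈ U i),
      s₀ x = asLC k (sf i) ⟨x.1, hx⟩ :=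
    fun x i hx => key (idx x) i x.1 (hidx x) hx
  have hlc : IsLocallyConstant s₀ := by
    rw [IsLocallyConstant.iff_exists_open]
    intro x
    obtain ⟨i, hi⟩ := hmemS x
    obtain ⟨W, hWopen, hpW, hWconst⟩ :=
      (IsLocallyConstant.iff_exists_open _).mp
        (asLC k (sf i)).isLocallyConstant ⟨x.1, hi⟩
    obtain ⟨O, hOopen, hWO⟩ := isOpen_induced_iff.mp hWopen
    subst hWO
    refine ⟨Subtype.val ⁻¹' (O ∩ (U i).1),
      (hOopen.inter (U i).2).preimage continuous_subtype_val, ⟨hpW, hi⟩, ?_⟩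
    intro y hy
    rw [hs₀ y i hy.2, hs₀ x i hi]
    exact hWconst ⟨y.1, hy.2⟩ hy.1
  refine ⟨⟨s₀, hlc⟩, ?_, ?_⟩
  · intro i
    show asLC k ((lcPresheaf k X).map (Opens.leSupr U i).op ⟨s₀, hlc⟩) = asLC k (sf i)
    apply LocallyConstant.ext
    intro y
    exact hs₀ ⟨y.1, leOfHom (Opens.leSupr U i) y.2⟩ i y.2
  · intro t ht
    show asLC k t = ⟨s₀, hlc⟩
    apply LocallyConstant.ext
    intro x
    have h2 : asLC k ((lcPresheaf k X).map (Opens.leSupr U (idx x)).op t)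
        = asLC k (sf (idx x)) := ht (idx x)
    exact DFunLike.congr_fun h2 (⟨x.1, hidx x⟩ : ↥(U (idx x)))

/-- The sheaf of locally constant functions. -/
def lcSheaf (X : TopCat.{0}) : TopCat.Sheaf (ModuleCat.{0} k) X :=
  ⟨lcPresheaf k X, lcPresheaf_isSheaf k X⟩

instance constToLc_locInj (X : TopCat.{0}) :
    Presheaf.IsLocallyInjective (Opens.grothendieckTopology ↥X) (constToLc k X) where
  equalizerSieve_mem {U} x y h := by
    intro z hz
    have hxy : (x : k) = (y : k) := by
      have := DFunLike.congr_fun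
        (show LocallyConstant.const ↥U.unop (x : k) = LocallyConstant.const ↥U.unop (y : k)
          from h) ⟨z, hz⟩
      exact this
    refine ⟨U.unop, 𝟙 _, ?_, hz⟩
    show ((Functor.const (Opens ↥X)ᵒᵖ).obj (ModuleCat.of k k)).map (𝟙 U.unop).op x
      = ((Functor.const (Opens ↥X)ᵒᵖ).obj (ModuleCat.of k k)).map (𝟙 U.unop).op y
    exact congrArg _ hxy

instance constToLc_locSurj (X : TopCat.{0}) :
    Presheaf.IsLocallySurjective (Opens.grothendieckTopology ↥X) (constToLc k X) where
  imageSieve_mem {U} s := by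
    intro z hz
    obtain ⟨W, hWopen, hpW, hWconst⟩ := (IsLocallyConstant.iff_exists_open _).mp
      ((asLC k s).isLocallyConstant) ⟨z, hz⟩
    obtain ⟨O, hOopen, hWO⟩ := isOpen_induced_iff.mp hWopen
    subst hWO
    refine ⟨U ⊓ ⟨O, hOopen⟩, homOfLE inf_le_left, ?_, hz, hpW⟩
    refine ⟨((asLC k s) ⟨z, hz⟩ : k), ?_⟩
    show LocallyConstant.const _ ((asLC k s) ⟨z, hz⟩)
      = asLC k ((lcPresheaf k X).map (homOfLE inf_le_left).op s)
    apply LocallyConstant.ext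
    rintro ⟨y, hyU, hyO⟩
    exact (hWconst ⟨y, hyU⟩ hyO).symm

/-- The constant sheaf is isomorphic to the sheaf of locally constant functions. -/
def constSheafIsoLc (X : TopCat.{0}) :
    (constantSheaf (Opens.grothendieckTopology ↥X) (ModuleCat.{0} k)).obj (ModuleCat.of k k)
      ≅ lcSheaf k X := by
  have hW : (Opens.grothendieckTopology ↥X).W (constToLc k X) :=
    GrothendieckTopology.W_of_isLocallyBijective _ _
  rw [GrothendieckTopology.W_iff] at hW
  exact (@asIso _ _ _ _ ((presheafToSheaf (Opens.grothendieckTopology ↥X) (ModuleCat.{0} k)).map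
      (constToLc k X)) hW) ≪≫
    (@asIso _ _ _ _ ((sheafificationAdjunction (Opens.grothendieckTopology ↥X)
      (ModuleCat.{0} k)).counit.app (lcSheaf k X)) (isIso_sheafificationAdjunction_counit _))

/-- Pullback along a quotient map whose fibers see only constant values is bijective on
locally constant functions. -/
lemma comap_bijective_of_isQuotientMap {X' Y' : Type} [TopologicalSpace X'] [TopologicalSpace Y']
    (q : C(X', Y')) (hq : IsQuotientMap q)
    (hfib : ∀ (f : LocallyConstant X' k) (p p' : X'), q p = q p' → f p = f p') :
    Function.Bijective
      (LocallyConstant.comapₗ k q : LocallyConstant Y' k →ₗ[k] LocallyConstant X' k) := by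
  constructor
  · intro g₁ g₂ h
    apply LocallyConstant.ext
    intro z
    obtain ⟨p, rfl⟩ := hq.surjective z
    exact DFunLike.congr_fun h p
  · intro f
    have hsec : ∀ z : Y', ∃ p : X', q p = z := hq.surjective
    set g0 : Y' → k := fun z => f (hsec z).choose with hg0
    have hgq : ∀ p, g0 (q p) = f p := fun p => hfib f _ p ((hsec (q p)).choose_spec)
    have hlc : IsLocallyConstant g0 := by
      intro s
      rw [← hq.isOpen_preimage]
      have : ⇑q ⁻¹' (g0 ⁻¹' s) = ⇑f ⁻¹' s := by
        ext p
        simp [Set.mem_preimage, hgq p]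
      rw [this]
      exact f.isLocallyConstant s
    refine ⟨⟨g0, hlc⟩, ?_⟩
    apply LocallyConstant.ext
    intro p
    exact hgq p


open CategoryTheory.Limits in
/-- Let `A, B ⊆ ℝⁿ` (`n ≥ 1`) be closed subsets such that the restriction of
the addition map `s : A × B → ℝⁿ` is proper (preimages of compact sets are compact) and has
contractible fibers over `A + B`. Then `A + B` is closed, and the pushforward along `s|_{A×B}` of
the constant sheaf `k_{A×B}` is isomorphic to the pushforward along the inclusion `A + B ↪ ℝⁿ`
of the constant sheaf `k_{A+B}`. -/
theorem pushforward_constant_sheaf_add (k : Type) [Field k] (n : ℕ) (hn : 1 ≤ n)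
    (A B : Set (EuclideanSpace ℝ (Fin n))) (hA : IsClosed A) (hB : IsClosed B)
    (hproper : ∀ K : Set (EuclideanSpace ℝ (Fin n)), IsCompact K →
      IsCompact {p : ↥(A ×ˢ B) | p.1.1 + p.1.2 ∈ K})
    (hfib : ∀ x ∈ {x | ∃ a ∈ A, ∃ b ∈ B, a + b = x},
      ContractibleSpace {p : ↥(A ×ˢ B) // p.1.1 + p.1.2 = x}) :
    IsClosed {x | ∃ a ∈ A, ∃ b ∈ B, a + b = x} ∧
    Nonempty
      (((TopCat.Sheaf.pushforward (ModuleCat.{0} k)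
          (TopCat.ofHom ⟨fun p => p.1.1 + p.1.2, by fun_prop⟩ :
            TopCat.of ↥(A ×ˢ B) ⟶ TopCat.of (EuclideanSpace ℝ (Fin n)))).obj
        ((constantSheaf (Opens.grothendieckTopology (TopCat.of ↥(A ×ˢ B)))
          (ModuleCat.{0} k)).obj (ModuleCat.of k k)))
      ≅ ((TopCat.Sheaf.pushforward (ModuleCat.{0} k)
          (TopCat.ofHom ⟨fun p => p.1, by fun_prop⟩ :
            TopCat.of ↥{x | ∃ a ∈ A, ∃ b ∈ B, a + b = x} ⟶
              TopCat.of (EuclideanSpace ℝ (Fin n)))).obj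
        ((constantSheaf
          (Opens.grothendieckTopology (TopCat.of ↥{x | ∃ a ∈ A, ∃ b ∈ B, a + b = x}))
          (ModuleCat.{0} k)).obj (ModuleCat.of k k)))) := by
  classical
  set Z : Set (EuclideanSpace ℝ (Fin n)) := {x | ∃ a ∈ A, ∃ b ∈ B, a + b = x} with hZdef
  set sfun : ↥(A ×ˢ B) → EuclideanSpace ℝ (Fin n) := fun p => p.1.1 + p.1.2 with hsfun
  have hcont : Continuous sfun := by fun_prop
  have hProp : IsProperMap sfun := by
    rw [isProperMap_iff_isCompact_preimage]
    exact ⟨hcont, fun K hK => hproper K hK⟩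
  have hrange : Set.range sfun = Z := by
    ext x
    constructor
    · rintro ⟨p, rfl⟩
      exact ⟨p.1.1, p.2.1, p.1.2, p.2.2, rfl⟩
    · rintro ⟨a, ha, b, hb, rfl⟩
      exact ⟨⟨(a, b), ⟨ha, hb⟩⟩, rfl⟩
  have hZclosed : IsClosed Z := hrange ▸ hProp.isClosed_range
  refine ⟨hZclosed, ?_⟩
  -- the corestriction `t : A × B → Z`
  have hmemZ : ∀ p : ↥(A ×ˢ B), sfun p ∈ Z := fun p => ⟨p.1.1, p.2.1, p.1.2, p.2.2, rfl⟩
  set t : ↥(A ×ˢ B) → ↥Z := fun p => ⟨sfun p, hmemZ p⟩ with ht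
  have htcont : Continuous t := hcont.subtype_mk _
  have htsurj : Function.Surjective t := by
    intro z
    haveI := hfib z.1 z.2
    obtain ⟨e⟩ := ContractibleSpace.hequiv_unit (X := {p : ↥(A ×ˢ B) // p.1.1 + p.1.2 = z.1})
    obtain ⟨p, hp⟩ := e.symm ()
    exact ⟨p, Subtype.ext hp⟩
  have htproper : IsProperMap t := by
    rw [isProperMap_iff_isCompact_preimage]
    refine ⟨htcont, fun K hK => ?_⟩
    have hKeq : t ⁻¹' K = sfun ⁻¹' (Subtype.val '' K) := by
      ext p
      constructor
      · intro hp
        exact ⟨t p, hp, rfl⟩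
      · rintro ⟨z, hzK, hz⟩
        have : t p = z := Subtype.ext hz.symm
        rw [← this] at hzK
        exact hzK
    rw [hKeq]
    exact hProp.isCompact_preimage (hK.image continuous_subtype_val)
  -- fibers of `t` are preconnected
  have hfibconn : ∀ z : ↥Z, IsPreconnected {p : ↥(A ×ˢ B) | t p = z} := by
    intro z
    haveI := hfib z.1 z.2
    have heq : {p : ↥(A ×ˢ B) | t p = z}
        = Set.range (Subtype.val : {p : ↥(A ×ˢ B) // p.1.1 + p.1.2 = z.1} → ↥(A ×ˢ B)) := by
      ext p
      simp only [Set.mem_setOf_eq, Subtype.range_coe_subtype]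
      exact ⟨fun h => congrArg Subtype.val h, fun h => Subtype.ext h⟩
    rw [heq]
    exact isPreconnected_range continuous_subtype_val
  -- set up the spaces and maps
  let sMap : TopCat.of ↥(A ×ˢ B) ⟶ TopCat.of (EuclideanSpace ℝ (Fin n)) := TopCat.ofHom ⟨sfun, hcont⟩
  let iMap : TopCat.of ↥Z ⟶ TopCat.of (EuclideanSpace ℝ (Fin n)) :=
    TopCat.ofHom ⟨Subtype.val, continuous_subtype_val⟩
  -- the comparison maps over each open set
  have hqmem : ∀ (U : Opens (EuclideanSpace ℝ (Fin n))) (p : ↥((Opens.map sMap).obj U)),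
      t p.1 ∈ (Opens.map iMap).obj U := fun U p => p.2
  set q : ∀ U : Opens (EuclideanSpace ℝ (Fin n)),
      ↥((Opens.map sMap).obj U) → ↥((Opens.map iMap).obj U) :=
    fun U p => ⟨t p.1, hqmem U p⟩ with hqdef
  have hqcont : ∀ U, Continuous (q U) :=
    fun U => (htcont.comp continuous_subtype_val).subtype_mk _
  have hqsurj : ∀ U, Function.Surjective (q U) := by
    intro U z
    obtain ⟨p, hp⟩ := htsurj (z.1 : ↥Z)
    have hpU : p ∈ (Opens.map sMap).obj U := by
      show sfun p ∈ U
      have h1 : sfun p = ((z.1 : ↥Z)).1 := congrArg Subtype.val hp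
      rw [h1]
      exact z.2
    exact ⟨⟨p, hpU⟩, Subtype.ext hp⟩
  have hqclosed : ∀ U, IsClosedMap (q U) := by
    intro U
    have h1 := htproper.isClosedMap.restrictPreimage (SetLike.coe ((Opens.map iMap).obj U))
    exact h1
  have hqquot : ∀ U, IsQuotientMap (q U) :=
    fun U => (hqclosed U).isQuotientMap (hqcont U) (hqsurj U)
  -- locally constant functions are constant on fibers of `q U`
  have hqfib : ∀ (U : Opens (EuclideanSpace ℝ (Fin n)))
      (f : LocallyConstant ↥((Opens.map sMap).obj U) k)
      (p p' : ↥((Opens.map sMap).obj U)), q U p = q U p' → f p = f p' := by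
    intro U f p p' h
    have hz : t p.1 = t p'.1 := congrArg Subtype.val h
    set z : ↥Z := t p.1 with hzdef
    haveI : PreconnectedSpace ↥{r : ↥(A ×ˢ B) | t r = z} := Subtype.preconnectedSpace (hfibconn z)
    have hmem : ∀ r : ↥{r : ↥(A ×ˢ B) | t r = z}, r.1 ∈ (Opens.map sMap).obj U := by
      intro r
      show sfun r.1 ∈ U
      have h1 : sfun r.1 = (z : EuclideanSpace ℝ (Fin n)) := congrArg Subtype.val r.2
      have h2 : (z : EuclideanSpace ℝ (Fin n)) = sfun p.1 := rfl
      rw [h1, h2]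
      exact p.2
    set ι : ↥{r : ↥(A ×ˢ B) | t r = z} → ↥((Opens.map sMap).obj U) :=
      fun r => ⟨r.1, hmem r⟩ with hι
    have hιcont : Continuous ι := continuous_subtype_val.subtype_mk _
    have hpre : IsPreconnected (Set.range ι) := isPreconnected_range hιcont
    have hpmem : p ∈ Set.range ι := ⟨⟨p.1, rfl⟩, Subtype.ext rfl⟩
    have hp'mem : p' ∈ Set.range ι := ⟨⟨p'.1, hz.symm⟩, Subtype.ext rfl⟩
    exact f.isLocallyConstant.apply_eq_of_isPreconnected hpre hpmem hp'mem
  -- the natural isomorphism between the pushforward presheaves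
  have hbij : ∀ U : Opens (EuclideanSpace ℝ (Fin n)), Function.Bijective
      (LocallyConstant.comapₗ k (⟨q U, hqcont U⟩ : C(_, _)) :
        LocallyConstant ↥((Opens.map iMap).obj U) k →ₗ[k]
          LocallyConstant ↥((Opens.map sMap).obj U) k) :=
    fun U => comap_bijective_of_isQuotientMap k _ (hqquot U) (hqfib U)
  let ν : ((TopCat.Sheaf.pushforward (ModuleCat.{0} k) iMap).obj
        (lcSheaf k (TopCat.of ↥Z))).val
      ≅ ((TopCat.Sheaf.pushforward (ModuleCat.{0} k) sMap).obj
        (lcSheaf k (TopCat.of ↥(A ×ˢ B)))).val :=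
    NatIso.ofComponents
      (fun U => (LinearEquiv.ofBijective _ (hbij U.unop)).toModuleIso)
      (by
        intro U V g
        ext f
        rfl)
  let νS : (TopCat.Sheaf.pushforward (ModuleCat.{0} k) iMap).obj (lcSheaf k (TopCat.of ↥Z))
      ≅ (TopCat.Sheaf.pushforward (ModuleCat.{0} k) sMap).obj
        (lcSheaf k (TopCat.of ↥(A ×ˢ B))) :=
    (sheafToPresheaf _ _).preimageIso ν
  exact ⟨((TopCat.Sheaf.pushforward (ModuleCat.{0} k) sMap).mapIso
      (constSheafIsoLc k (TopCat.of ↥(A ×ˢ B)))) ≪≫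
    νS.symm ≪≫
    ((TopCat.Sheaf.pushforward (ModuleCat.{0} k) iMap).mapIso
      (constSheafIsoLc k (TopCat.of ↥Z))).symm⟩

end
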